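/- Let r_0, r_1, r_2 be strictly increasing functions from the positive integers to the positive integers whose ranges are pairwise disjoint and whose union is all positive integers, with r_0(1) = 1, and suppose n/r_0(n) → 0 as n → ∞. For each positive integer N let L_N be the number of pairs (i,j) with 1 ≤ i, j ≤ N, i ≤ r_1(j) and j ≤ r_2(i). Then L_N/N² → 1/2 as N → ∞; that is, the staircase form with column support lengths r_1(n) and row support lengths r_2(n) has support density 1/2. -/

import Mathlib

open Filter Finset

private lemma stair_self_le (r : ℕ → ℕ)
    (hm : ∀ m n, 1 ≤ m → m < n → r m < r n) (h1 : 1 ≤ r 1) :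
    ∀ n, 1 ≤ n → n ≤ r n := by
  intro n hn
  induction n with
  | zero => omega
  | succ k ih =>
    rcases Nat.eq_zero_or_pos k with hk | hk
    · subst hk; simpa using h1
    · have h2 := hm k (k+1) hk (Nat.lt_succ_self k)
      have h3 := ih hk
      omega

open scoped Classical in
private lemma stair_count (r0 r1 r2 : ℕ → ℕ)
    (hmono0 : ∀ m n, 1 ≤ m → m < n → r0 m < r0 n)
    (hmono1 : ∀ m n, 1 ≤ m → m < n → r1 m < r1 n)
    (hmono2 : ∀ m n, 1 ≤ m → m < n → r2 m < r2 n)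
    (hpos : ∀ n, 1 ≤ n → 1 ≤ r0 n ∧ 1 ≤ r1 n ∧ 1 ≤ r2 n)
    (hdisj : ∀ m n, 1 ≤ m → 1 ≤ n → r0 m ≠ r1 n ∧ r0 m ≠ r2 n ∧ r1 m ≠ r2 n)
    (hcover : ∀ p, 1 ≤ p →
      (∃ n, 1 ≤ n ∧ r0 n = p) ∨ (∃ n, 1 ≤ n ∧ r1 n = p) ∨ (∃ n, 1 ≤ n ∧ r2 n = p))
    (N : ℕ) :
    ((Finset.Icc 1 N ×ˢ Finset.Icc 1 N).filter
        (fun p : ℕ × ℕ => p.1 ≤ r1 p.2 ∧ p.2 ≤ r2 p.1)).card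
      + ∑ i ∈ Finset.Icc 1 N, (i - 1)
    = N ^ 2 + ∑ i ∈ Finset.Icc 1 N,
        ((Finset.Ico 1 i).filter (fun p => ∃ m, 1 ≤ m ∧ r0 m = p)).card := by
  have hs0 := stair_self_le r0 hmono0 (hpos 1 le_rfl).1
  have hs1 := stair_self_le r1 hmono1 (hpos 1 le_rfl).2.1
  have hs2 := stair_self_le r2 hmono2 (hpos 1 le_rfl).2.2
  set S := Finset.Icc 1 N ×ˢ Finset.Icc 1 N with hS
  set G := S.filter (fun p : ℕ × ℕ => p.1 ≤ r1 p.2 ∧ p.2 ≤ r2 p.1) with hG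
  -- split into good and bad
  have hGB : G.card + (S.filter (fun p : ℕ × ℕ => ¬(p.1 ≤ r1 p.2 ∧ p.2 ≤ r2 p.1))).card
      = N ^ 2 := by
    rw [Finset.card_filter_add_card_filter_not]
    simp [hS, Nat.card_Icc, sq]
  set B1 := S.filter (fun p : ℕ × ℕ => r1 p.2 < p.1) with hB1
  set B2 := S.filter (fun p : ℕ × ℕ => r2 p.1 < p.2) with hB2
  have hbadeq : (S.filter (fun p : ℕ × ℕ => ¬(p.1 ≤ r1 p.2 ∧ p.2 ≤ r2 p.1))) = B1 ∪ B2 := by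
    rw [hB1, hB2, ← Finset.filter_or]
    apply Finset.filter_congr
    intro x _
    constructor
    · intro h
      rcases not_and_or.mp h with h | h
      · exact Or.inl (Nat.lt_of_not_le h)
      · exact Or.inr (Nat.lt_of_not_le h)
    · intro h hc
      rcases h with h | h <;> omega
  have hdisjB : Disjoint B1 B2 := by
    rw [hB1, hB2]
    rw [Finset.disjoint_filter]
    rintro ⟨a, b⟩ hx h1 h2
    simp only [hS, Finset.mem_product, Finset.mem_Icc] at hx
    have hb := hs1 b hx.2.1
    have ha := hs2 a hx.1.1
    simp only at h1 h2
    omega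
  have hbadcard : (S.filter (fun p : ℕ × ℕ => ¬(p.1 ≤ r1 p.2 ∧ p.2 ≤ r2 p.1))).card
      = B1.card + B2.card := by
    rw [hbadeq, Finset.card_union_of_disjoint hdisjB]
  -- fiberwise counting for B1
  have hB1card : B1.card = ∑ i ∈ Finset.Icc 1 N,
      ((Finset.Icc 1 N).filter (fun j => r1 j < i)).card := by
    rw [Finset.card_eq_sum_card_fiberwise (f := Prod.fst) (t := Finset.Icc 1 N)
      (by rintro ⟨a, b⟩ hx
          change (a, b) ∈ B1 at hx
          simp only [hB1, hS, Finset.mem_filter, Finset.mem_product] at hx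
          exact hx.1.1)]
    apply Finset.sum_congr rfl
    intro i hi
    have : (B1.filter (fun p : ℕ × ℕ => p.1 = i)) = {i} ×ˢ ((Finset.Icc 1 N).filter (fun j => r1 j < i)) := by
      ext ⟨a, b⟩
      simp only [hB1, hS, Finset.mem_filter, Finset.mem_product, Finset.mem_singleton]
      constructor
      · rintro ⟨⟨⟨ha, hb⟩, hlt⟩, rfl⟩
        exact ⟨rfl, hb, hlt⟩
      · rintro ⟨rfl, hb, hlt⟩
        exact ⟨⟨⟨hi, hb⟩, hlt⟩, rfl⟩
    rw [this, Finset.card_product, Finset.card_singleton, one_mul]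
  have hB2card : B2.card = ∑ i ∈ Finset.Icc 1 N,
      ((Finset.Icc 1 N).filter (fun j => r2 j < i)).card := by
    rw [Finset.card_eq_sum_card_fiberwise (f := Prod.snd) (t := Finset.Icc 1 N)
      (by rintro ⟨a, b⟩ hx
          change (a, b) ∈ B2 at hx
          simp only [hB2, hS, Finset.mem_filter, Finset.mem_product] at hx
          exact hx.1.2)]
    apply Finset.sum_congr rfl
    intro i hi
    have : (B2.filter (fun p : ℕ × ℕ => p.2 = i)) = ((Finset.Icc 1 N).filter (fun j => r2 j < i)) ×ˢ {i} := by
      ext ⟨a, b⟩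
      simp only [hB2, hS, Finset.mem_filter, Finset.mem_product, Finset.mem_singleton]
      constructor
      · rintro ⟨⟨⟨ha, hb⟩, hlt⟩, rfl⟩
        exact ⟨⟨ha, hlt⟩, rfl⟩
      · rintro ⟨⟨ha, hlt⟩, rfl⟩
        exact ⟨⟨⟨ha, hi⟩, hlt⟩, rfl⟩
    rw [this, Finset.card_product, Finset.card_singleton, mul_one]
  -- per-index identity
  have hkey : ∀ i ∈ Finset.Icc 1 N,
      ((Finset.Icc 1 N).filter (fun j => r1 j < i)).card
      + ((Finset.Icc 1 N).filter (fun j => r2 j < i)).card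
      + ((Finset.Ico 1 i).filter (fun p => ∃ m, 1 ≤ m ∧ r0 m = p)).card
      = i - 1 := by
    intro i hi
    simp only [Finset.mem_Icc] at hi
    have hA : ((Finset.Icc 1 N).filter (fun j => r1 j < i)).card
        = ((Finset.Ico 1 i).filter (fun p => ∃ m, 1 ≤ m ∧ r1 m = p)).card := by
      apply Finset.card_bij (fun j _ => r1 j)
      · intro a ha
        simp only [Finset.mem_filter, Finset.mem_Icc] at ha
        simp only [Finset.mem_filter, Finset.mem_Ico]
        exact ⟨⟨(hpos a ha.1.1).2.1, ha.2⟩, a, ha.1.1, rfl⟩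
      · intro a ha b hb hab
        simp only [Finset.mem_filter, Finset.mem_Icc] at ha hb
        by_contra hne
        rcases Nat.lt_or_ge a b with h | h
        · exact absurd hab (Nat.ne_of_lt (hmono1 a b ha.1.1 h))
        · have : b < a := by omega
          exact absurd hab.symm (Nat.ne_of_lt (hmono1 b a hb.1.1 this))
      · intro p hp
        simp only [Finset.mem_filter, Finset.mem_Ico] at hp
        obtain ⟨⟨hp1, hp2⟩, m, hm1, hm3⟩ := hp
        have hmle : m ≤ r1 m := hs1 m hm1
        refine ⟨m, ?_, hm3⟩
        simp only [Finset.mem_filter, Finset.mem_Icc]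
        exact ⟨⟨hm1, by omega⟩, by omega⟩
    have hB : ((Finset.Icc 1 N).filter (fun j => r2 j < i)).card
        = ((Finset.Ico 1 i).filter (fun p => ∃ m, 1 ≤ m ∧ r2 m = p)).card := by
      apply Finset.card_bij (fun j _ => r2 j)
      · intro a ha
        simp only [Finset.mem_filter, Finset.mem_Icc] at ha
        simp only [Finset.mem_filter, Finset.mem_Ico]
        exact ⟨⟨(hpos a ha.1.1).2.2, ha.2⟩, a, ha.1.1, rfl⟩
      · intro a ha b hb hab
        simp only [Finset.mem_filter, Finset.mem_Icc] at ha hb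
        by_contra hne
        rcases Nat.lt_or_ge a b with h | h
        · exact absurd hab (Nat.ne_of_lt (hmono2 a b ha.1.1 h))
        · have : b < a := by omega
          exact absurd hab.symm (Nat.ne_of_lt (hmono2 b a hb.1.1 this))
      · intro p hp
        simp only [Finset.mem_filter, Finset.mem_Ico] at hp
        obtain ⟨⟨hp1, hp2⟩, m, hm1, hm3⟩ := hp
        have hmle : m ≤ r2 m := hs2 m hm1
        refine ⟨m, ?_, hm3⟩
        simp only [Finset.mem_filter, Finset.mem_Icc]
        exact ⟨⟨hm1, by omega⟩, by omega⟩
    rw [hA, hB]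
    have hd12 : Disjoint ((Finset.Ico 1 i).filter (fun p => ∃ m, 1 ≤ m ∧ r1 m = p))
        ((Finset.Ico 1 i).filter (fun p => ∃ m, 1 ≤ m ∧ r2 m = p)) := by
      rw [Finset.disjoint_filter]
      rintro p hp ⟨m, hm1, hm2⟩ ⟨n, hn1, hn2⟩
      exact (hdisj m n hm1 hn1).2.2 (hm2.trans hn2.symm)
    have hd012 : Disjoint (((Finset.Ico 1 i).filter (fun p => ∃ m, 1 ≤ m ∧ r1 m = p))
        ∪ ((Finset.Ico 1 i).filter (fun p => ∃ m, 1 ≤ m ∧ r2 m = p)))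
        ((Finset.Ico 1 i).filter (fun p => ∃ m, 1 ≤ m ∧ r0 m = p)) := by
      rw [← Finset.filter_or, Finset.disjoint_filter]
      rintro p hp (⟨m, hm1, hm2⟩ | ⟨m, hm1, hm2⟩) ⟨n, hn1, hn2⟩
      · exact (hdisj n m hn1 hm1).1 (hn2.trans hm2.symm)
      · exact (hdisj n m hn1 hm1).2.1 (hn2.trans hm2.symm)
    have hcov : (((Finset.Ico 1 i).filter (fun p => ∃ m, 1 ≤ m ∧ r1 m = p))
        ∪ ((Finset.Ico 1 i).filter (fun p => ∃ m, 1 ≤ m ∧ r2 m = p)))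
        ∪ ((Finset.Ico 1 i).filter (fun p => ∃ m, 1 ≤ m ∧ r0 m = p))
        = Finset.Ico 1 i := by
      rw [← Finset.filter_or, ← Finset.filter_or]
      apply Finset.filter_true_of_mem
      intro p hp
      simp only [Finset.mem_Ico] at hp
      rcases hcover p hp.1 with ⟨n, hn1, hn2⟩ | ⟨n, hn1, hn2⟩ | ⟨n, hn1, hn2⟩
      · exact Or.inr ⟨n, hn1, hn2⟩
      · exact Or.inl (Or.inl ⟨n, hn1, hn2⟩)
      · exact Or.inl (Or.inr ⟨n, hn1, hn2⟩)
    have := congrArg Finset.card hcov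
    rw [Finset.card_union_of_disjoint hd012, Finset.card_union_of_disjoint hd12,
      Nat.card_Ico] at this
    omega
  -- assemble
  have hsum : ∑ i ∈ Finset.Icc 1 N, (i - 1)
      = B1.card + B2.card + ∑ i ∈ Finset.Icc 1 N,
        ((Finset.Ico 1 i).filter (fun p => ∃ m, 1 ≤ m ∧ r0 m = p)).card := by
    rw [hB1card, hB2card, ← Finset.sum_add_distrib, ← Finset.sum_add_distrib]
    exact (Finset.sum_congr rfl hkey).symm
  omega

-- card of {m ∈ [1,N] : r0 m ≤ N} over N tends to 0
private lemma stair_sparse (r0 : ℕ → ℕ)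
    (hpos0 : ∀ n, 1 ≤ n → 1 ≤ r0 n)
    (hratio : Tendsto (fun n : ℕ => (n : ℝ) / (r0 n : ℝ)) atTop (nhds 0)) :
    Tendsto (fun N : ℕ =>
      (((Finset.Icc 1 N).filter (fun m => r0 m ≤ N)).card : ℝ) / N) atTop (nhds 0) := by
  rw [Metric.tendsto_atTop] at hratio ⊢
  intro ε hε
  obtain ⟨M, hM⟩ := hratio (ε/2) (by linarith)
  obtain ⟨K, hK⟩ := exists_nat_gt ((M + 1 : ℝ) / (ε/2))
  refine ⟨max K 1, fun N hN => ?_⟩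
  have hN1 : 1 ≤ N := le_of_max_le_right hN
  have hNK : K ≤ N := le_of_max_le_left hN
  have hNpos : (0:ℝ) < N := by exact_mod_cast hN1
  set D := (Finset.Icc 1 N).filter (fun m => r0 m ≤ N) with hD
  have hsub : D ⊆ Finset.range M ∪ Finset.range (⌊(ε/2) * N⌋₊ + 1) := by
    intro m hm
    simp only [hD, Finset.mem_filter, Finset.mem_Icc] at hm
    rcases Nat.lt_or_ge m M with h | h
    · exact Finset.mem_union_left _ (Finset.mem_range.mpr h)
    · refine Finset.mem_union_right _ (Finset.mem_range.mpr ?_)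
      have hd := hM m h
      rw [Real.dist_eq, sub_zero, abs_of_nonneg (by positivity)] at hd
      have hr0pos : (0:ℝ) < (r0 m : ℝ) := by
        exact_mod_cast hpos0 m hm.1.1
      have hmlt : (m : ℝ) < (ε/2) * (r0 m : ℝ) := by
        rwa [div_lt_iff₀ hr0pos] at hd
      have hle : (r0 m : ℝ) ≤ (N : ℝ) := by exact_mod_cast hm.2
      have : (m : ℝ) ≤ (ε/2) * N := by nlinarith
      have := Nat.le_floor this
      omega
  have hcard : D.card ≤ M + (⌊(ε/2) * N⌋₊ + 1) := by
    calc D.card ≤ (Finset.range M ∪ Finset.range (⌊(ε/2) * N⌋₊ + 1)).card :=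
          Finset.card_le_card hsub
      _ ≤ M + (⌊(ε/2) * N⌋₊ + 1) := by
          apply le_trans (Finset.card_union_le _ _)
          simp
  have hcardR : (D.card : ℝ) ≤ (M : ℝ) + 1 + (ε/2) * N := by
    have hfl : (⌊(ε/2) * N⌋₊ : ℝ) ≤ (ε/2) * N := Nat.floor_le (by positivity)
    have : (D.card : ℝ) ≤ (M : ℝ) + ((⌊(ε/2) * N⌋₊ : ℝ) + 1) := by exact_mod_cast hcard
    linarith
  rw [Real.dist_eq, sub_zero, abs_of_nonneg (by positivity)]
  have hMN : (M + 1 : ℝ) < (ε/2) * N := by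
    have h1 : (M + 1 : ℝ) < (ε/2) * K := by
      rw [div_lt_iff₀ (by linarith)] at hK
      linarith [hK]
    have h2 : (ε/2) * (K:ℝ) ≤ (ε/2) * N := by
      have : (K:ℝ) ≤ N := by exact_mod_cast hNK
      nlinarith
    linarith
  rw [div_lt_iff₀ hNpos]
  calc (D.card : ℝ) ≤ (M:ℝ) + 1 + (ε/2) * N := hcardR
    _ < (ε/2) * N + (ε/2) * N := by linarith
    _ = ε * N := by ring

private lemma stair_gauss : ∀ N : ℕ, 2 * ∑ i ∈ Finset.Icc 1 N, (i - 1) = N^2 - N := by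
  intro N
  induction N with
  | zero => simp
  | succ K ih =>
    rw [Finset.sum_Icc_succ_top (by omega : 1 ≤ K + 1)]
    have h1 : (K+1)^2 = K^2 + 2*K + 1 := by ring
    have h2 : K ≤ K^2 := Nat.le_self_pow (by omega) K
    omega

/-- Let `r0, r1, r2` be strictly increasing functions on the positive
integers with pairwise disjoint ranges covering all positive integers, `r0 1 = 1`, and
`n / r0 n → 0`.  Let `L N` be the number of pairs `(i, j)` with `1 ≤ i, j ≤ N`, `i ≤ r1 j`
and `j ≤ r2 i`.  Then `L N / N² → 1/2`: the staircase form with column support lengths `r1 n`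
and row support lengths `r2 n` has support density `1/2`. -/
theorem staircase_density_one_half
    (r0 r1 r2 : ℕ → ℕ)
    (hmono0 : ∀ m n, 1 ≤ m → m < n → r0 m < r0 n)
    (hmono1 : ∀ m n, 1 ≤ m → m < n → r1 m < r1 n)
    (hmono2 : ∀ m n, 1 ≤ m → m < n → r2 m < r2 n)
    (hpos : ∀ n, 1 ≤ n → 1 ≤ r0 n ∧ 1 ≤ r1 n ∧ 1 ≤ r2 n)
    (hdisj : ∀ m n, 1 ≤ m → 1 ≤ n → r0 m ≠ r1 n ∧ r0 m ≠ r2 n ∧ r1 m ≠ r2 n)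
    (hcover : ∀ p, 1 ≤ p →
      (∃ n, 1 ≤ n ∧ r0 n = p) ∨ (∃ n, 1 ≤ n ∧ r1 n = p) ∨ (∃ n, 1 ≤ n ∧ r2 n = p))
    (hr01 : r0 1 = 1)
    (hratio : Tendsto (fun n : ℕ => (n : ℝ) / (r0 n : ℝ)) atTop (nhds 0)) :
    Tendsto (fun N : ℕ =>
        (((Finset.Icc 1 N ×ˢ Finset.Icc 1 N).filter
          (fun p : ℕ × ℕ => p.1 ≤ r1 p.2 ∧ p.2 ≤ r2 p.1)).card : ℝ) / (N : ℝ) ^ 2)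
      atTop (nhds (1 / 2)) := by
  classical
  have hpos0 : ∀ n, 1 ≤ n → 1 ≤ r0 n := fun n hn => (hpos n hn).1
  have hs0 := stair_self_le r0 hmono0 (hpos 1 le_rfl).1
  have hcount := stair_count r0 r1 r2 hmono0 hmono1 hmono2 hpos hdisj hcover
  -- notation for the two auxiliary counts
  set g : ℕ → ℕ := fun i => ((Finset.Ico 1 i).filter (fun p => ∃ m, 1 ≤ m ∧ r0 m = p)).card
    with hgdef
  set D : ℕ → ℕ := fun N => ((Finset.Icc 1 N).filter (fun m => r0 m ≤ N)).card with hDdef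
  -- each g i (i ≤ N+1) is at most D N
  have hgD : ∀ N, ∀ i ≤ N + 1, g i ≤ D N := by
    intro N i hi
    have hsub : ((Finset.Ico 1 i).filter (fun p => ∃ m, 1 ≤ m ∧ r0 m = p))
        ⊆ ((Finset.Ico 1 (N+1)).filter (fun p => ∃ m, 1 ≤ m ∧ r0 m = p)) :=
      Finset.filter_subset_filter _ (Finset.Ico_subset_Ico le_rfl (by omega))
    refine le_trans (Finset.card_le_card hsub) ?_
    apply Finset.card_le_card_of_surjOn r0
    intro p hp
    simp only [Finset.coe_filter, Set.mem_setOf_eq, Finset.mem_Ico] at hp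
    obtain ⟨⟨hp1, hp2⟩, m, hm1, hm2⟩ := hp
    have hmle : m ≤ r0 m := hs0 m hm1
    refine ⟨m, ?_, hm2⟩
    simp only [Finset.coe_filter, Set.mem_setOf_eq, Finset.mem_Icc]
    exact ⟨⟨hm1, by omega⟩, by omega⟩
  -- the γ-sum is o(N²)
  have hsum_le : ∀ N : ℕ, ∑ i ∈ Finset.Icc 1 N, g i ≤ N * D N := by
    intro N
    calc ∑ i ∈ Finset.Icc 1 N, g i ≤ ∑ i ∈ Finset.Icc 1 N, D N := by
          apply Finset.sum_le_sum
          intro i hi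
          simp only [Finset.mem_Icc] at hi
          exact hgD N i (by omega)
      _ = N * D N := by simp [Nat.card_Icc, mul_comm]
  have hDtend := stair_sparse r0 hpos0 hratio
  have h2 : Tendsto (fun N : ℕ => ((∑ i ∈ Finset.Icc 1 N, g i : ℕ) : ℝ) / (N:ℝ)^2)
      atTop (nhds 0) := by
    apply tendsto_of_tendsto_of_tendsto_of_le_of_le' tendsto_const_nhds hDtend
    · filter_upwards with N
      exact div_nonneg (Nat.cast_nonneg _) (pow_nonneg (Nat.cast_nonneg N) 2)
    · filter_upwards [eventually_ge_atTop 1] with N hN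
      have hNpos : (0:ℝ) < N := by exact_mod_cast hN
      rw [div_le_div_iff₀ (pow_pos hNpos 2) hNpos]
      have hcast : ((∑ i ∈ Finset.Icc 1 N, g i : ℕ) : ℝ) ≤ (N : ℝ) * (D N : ℝ) := by
        exact_mod_cast hsum_le N
      calc ((∑ i ∈ Finset.Icc 1 N, g i : ℕ) : ℝ) * (N:ℝ)
          ≤ ((N:ℝ) * (D N : ℝ)) * (N:ℝ) := mul_le_mul_of_nonneg_right hcast (le_of_lt hNpos)
        _ = (D N : ℝ) * (N:ℝ)^2 := by ring
  -- the triangular sum tends to 1/2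
  have h1 : Tendsto (fun N : ℕ => ((∑ i ∈ Finset.Icc 1 N, (i - 1) : ℕ) : ℝ) / (N:ℝ)^2)
      atTop (nhds (1/2)) := by
    have h0 := tendsto_one_div_atTop_nhds_zero_nat.mul_const (1/2 : ℝ)
    have hbase : Tendsto (fun N : ℕ => 1/2 - (1/(N:ℝ)) * (1/2)) atTop (nhds (1/2)) := by
      have hc : Tendsto (fun _ : ℕ => (1/2 : ℝ)) atTop (nhds (1/2)) := tendsto_const_nhds
      simpa using hc.sub h0
    apply hbase.congr'
    filter_upwards [eventually_ge_atTop 1] with N hN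
    have hNpos : (0:ℝ) < N := by exact_mod_cast hN
    have hNne : (N:ℝ) ≠ 0 := ne_of_gt hNpos
    have hNle : N ≤ N^2 := Nat.le_self_pow (by omega) N
    have hcast : 2 * ((∑ i ∈ Finset.Icc 1 N, (i - 1) : ℕ) : ℝ) = (N:ℝ)^2 - N := by
      have h := congrArg (fun k : ℕ => (k : ℝ)) (stair_gauss N)
      simp only [Nat.cast_mul, Nat.cast_sub hNle, Nat.cast_pow, Nat.cast_ofNat] at h
      exact h
    have hval : ((∑ i ∈ Finset.Icc 1 N, (i - 1) : ℕ) : ℝ) = ((N:ℝ)^2 - N)/2 := by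
      linarith
    rw [hval]
    field_simp
  -- eventual identity and conclusion
  have hone : Tendsto (fun _ : ℕ => (1:ℝ)) atTop (nhds 1) := tendsto_const_nhds
  have hfinal := (hone.add h2).sub h1
  have heq : ((1:ℝ) + 0) - 1/2 = 1/2 := by norm_num
  rw [heq] at hfinal
  apply hfinal.congr'
  filter_upwards [eventually_ge_atTop 1] with N hN
  have hNpos : (0:ℝ) < N := by exact_mod_cast hN
  have hn2 : ((N:ℝ)^2) ≠ 0 := ne_of_gt (pow_pos hNpos 2)
  have hcast : (((Finset.Icc 1 N ×ˢ Finset.Icc 1 N).filter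
        (fun p : ℕ × ℕ => p.1 ≤ r1 p.2 ∧ p.2 ≤ r2 p.1)).card : ℝ)
      + ((∑ i ∈ Finset.Icc 1 N, (i - 1) : ℕ) : ℝ)
      = (N:ℝ)^2 + ((∑ i ∈ Finset.Icc 1 N, g i : ℕ) : ℝ) := by
    exact_mod_cast congrArg (fun k : ℕ => (k : ℝ)) (hcount N)
  have hval : (((Finset.Icc 1 N ×ˢ Finset.Icc 1 N).filter
        (fun p : ℕ × ℕ => p.1 ≤ r1 p.2 ∧ p.2 ≤ r2 p.1)).card : ℝ)
      = (N:ℝ)^2 + ((∑ i ∈ Finset.Icc 1 N, g i : ℕ) : ℝ)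
        - ((∑ i ∈ Finset.Icc 1 N, (i - 1) : ℕ) : ℝ) := by
    linarith
  rw [hval, sub_div, add_div, div_self hn2]
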